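/- Let q ∈ ℂ with |q| < 1/2, and let ψ(q) = ∑_{n≥0} q^{n(n+1)/2} be Ramanujan's theta function. Then the family ((−1)^{ℓ(c)} q^{|c|}) indexed by compositions c ∈ C_{P₃} into triangular parts is summable, ψ(q) ≠ 0, and ∑_{c∈C_{P₃}} (−1)^{ℓ(c)} q^{|c|} = 1/ψ(q). -/

import Mathlib

set_option maxHeartbeats 1000000 in
lemma tuple_tsum_pow {β : Type*} (f : β → ℂ) (hf : Summable (fun x => ‖f x‖)) (n : ℕ) :
    Summable (fun v : Fin n → β => ‖∏ i, f (v i)‖) ∧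
    (∑' v : Fin n → β, ∏ i, f (v i)) = (∑' x, f x) ^ n ∧
    (∑' v : Fin n → β, ‖∏ i, f (v i)‖) = (∑' x, ‖f x‖) ^ n := by
  induction n with
  | zero =>
      haveI : Unique (Fin 0 → β) := ⟨⟨fun i => i.elim0⟩, fun v => funext fun i => i.elim0⟩
      have h1 : ∀ v : Fin 0 → β, (∏ i, f (v i)) = 1 := fun v => by simp
      refine ⟨?_, ?_, ?_⟩
      · simp only [h1, norm_one]; exact .of_finite
      · rw [tsum_eq_single (default) (fun b hb => absurd (Subsingleton.elim b default) hb),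
          h1, pow_zero]
      · rw [tsum_eq_single (default) (fun b hb => absurd (Subsingleton.elim b default) hb),
          h1, norm_one, pow_zero]
  | succ n ih =>
      obtain ⟨ihS, ihT, ihN⟩ := ih
      let e : β × (Fin n → β) ≃ (Fin (n + 1) → β) := Fin.consEquiv (fun _ => β)
      have he : ∀ p : β × (Fin n → β), (∏ i, f ((e p) i)) = f p.1 * ∏ i, f (p.2 i) := by
        intro p
        have hc : (fun i => f ((Fin.cons p.1 p.2 : Fin (n+1) → β) i))
            = (Fin.cons (f p.1) (fun i => f (p.2 i)) : Fin (n+1) → ℂ) := by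
          funext i; exact congrFun (Fin.comp_cons f p.1 p.2) i
        calc (∏ i, f ((e p) i)) = ∏ i, (Fin.cons (f p.1) (fun i => f (p.2 i)) : Fin (n+1) → ℂ) i := by
              rw [← hc]; rfl
          _ = f p.1 * ∏ i, f (p.2 i) := Fin.prod_cons _ _
      have hmulS : Summable (fun p : β × (Fin n → β) => f p.1 * ∏ i, f (p.2 i)) :=
        summable_mul_of_summable_norm (R := ℂ) (f := f)
          (g := fun v : Fin n → β => ∏ i, f (v i)) hf ihS
      have hmulN : Summable (fun p : β × (Fin n → β) => ‖f p.1 * ∏ i, f (p.2 i)‖) :=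
        Summable.mul_norm (R := ℂ) (f := f) (g := fun v : Fin n → β => ∏ i, f (v i)) hf ihS
      refine ⟨?_, ?_, ?_⟩
      · rw [← e.summable_iff]
        exact hmulN.congr fun p => by simp only [Function.comp_apply]; rw [he p]
      · calc (∑' v : Fin (n + 1) → β, ∏ i, f (v i))
            = ∑' p : β × (Fin n → β), ∏ i, f ((e p) i) := (e.tsum_eq _).symm
          _ = ∑' p : β × (Fin n → β), f p.1 * ∏ i, f (p.2 i) := tsum_congr he
          _ = (∑' x, f x) * ∑' v : Fin n → β, ∏ i, f (v i) :=
              (tsum_mul_tsum_of_summable_norm (R := ℂ) (f := f)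
                (g := fun v : Fin n → β => ∏ i, f (v i)) hf ihS).symm
          _ = (∑' x, f x) ^ (n + 1) := by rw [ihT, pow_succ]; ring
      · calc (∑' v : Fin (n + 1) → β, ‖∏ i, f (v i)‖)
            = ∑' p : β × (Fin n → β), ‖∏ i, f ((e p) i)‖ := (e.tsum_eq _).symm
          _ = ∑' p : β × (Fin n → β), ‖f p.1‖ * ‖∏ i, f (p.2 i)‖ :=
              tsum_congr fun p => by rw [he p, norm_mul]
          _ = (∑' x, ‖f x‖) * ∑' v : Fin n → β, ‖∏ i, f (v i)‖ :=
              (tsum_mul_tsum_of_summable_norm (R := ℝ) (f := fun x => ‖f x‖)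
                (g := fun v : Fin n → β => ‖∏ i, f (v i)‖)
                (by simpa using hf) (by simpa using ihS)).symm
          _ = (∑' x, ‖f x‖) ^ (n + 1) := by rw [ihN, pow_succ]; ring

set_option maxHeartbeats 1000000 in
lemma sigma_tsum_geometric {β : Type*} (f : β → ℂ) (hf : Summable (fun x => ‖f x‖))
    (hs : (∑' x, ‖f x‖) < 1) :
    Summable (fun p : Σ n, Fin n → β => ∏ i, f (p.2 i)) ∧
    (∑' p : Σ n, Fin n → β, ∏ i, f (p.2 i)) = (1 - ∑' x, f x)⁻¹ := by
  have h0 : 0 ≤ ∑' x, ‖f x‖ := tsum_nonneg fun x => norm_nonneg _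
  have hN : Summable (fun p : Σ n, Fin n → β => ‖∏ i, f (p.2 i)‖) := by
    apply (summable_sigma_of_nonneg (fun p => norm_nonneg _)).2
    refine ⟨fun n => (tuple_tsum_pow f hf n).1, ?_⟩
    apply Summable.congr (summable_geometric_of_lt_one h0 hs)
    intro n
    exact ((tuple_tsum_pow f hf n).2.2).symm
  have hS : Summable (fun p : Σ n, Fin n → β => ∏ i, f (p.2 i)) :=
    Summable.of_norm (E := ℂ) (f := fun p : (Σ n, Fin n → β) => ∏ i, f (p.2 i)) hN
  refine ⟨hS, ?_⟩
  have hnorm : ‖∑' x, f x‖ < 1 := lt_of_le_of_lt (norm_tsum_le_tsum_norm hf) hs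
  rw [hS.tsum_sigma' (fun n => Summable.of_norm (E := ℂ)
    (f := fun v : Fin n → β => ∏ i, f (v i)) (tuple_tsum_pow f hf n).1)]
  calc (∑' n : ℕ, ∑' v : Fin n → β, ∏ i, f (v i))
      = ∑' n : ℕ, (∑' x, f x) ^ n := tsum_congr fun n => (tuple_tsum_pow f hf n).2.1
    _ = (1 - ∑' x, f x)⁻¹ := tsum_geometric_of_norm_lt_one hnorm

def listSubtypeEquiv {α : Type*} (p : α → Prop) :
    List {x : α // p x} ≃ {l : List α // ∀ x ∈ l, p x} where
  toFun m := ⟨m.map Subtype.val, fun i hi => by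
    obtain ⟨x, _, rfl⟩ := List.mem_map.mp hi; exact x.2⟩
  invFun l := l.val.pmap (fun a h => ⟨a, h⟩) l.2
  left_inv m := by
    induction m with
    | nil => rfl
    | cons a m ih => simp_all [List.pmap_map, List.pmap_eq_map]
  right_inv l := Subtype.ext (by simp [List.map_pmap, List.pmap_eq_map])

/-- The reciprocal of Ramanujan's theta function `ψ(q) = ∑_{n≥0} q^{n(n+1)/2}` is the
sum of `(-1)^{ℓ(c)} q^{|c|}` over compositions into triangular parts, for `|q| < 1/2`. -/
theorem reciprocal_psi_as_composition_series (q : ℂ) (hq : ‖q‖ < 1 / 2) :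
    Summable (fun c : {l : List ℕ // ∀ i ∈ l, ∃ n : ℕ, 1 ≤ n ∧ 2 * i = n * (n + 1)} =>
        (-1 : ℂ) ^ c.val.length * q ^ c.val.sum) ∧
    (∑' n : ℕ, q ^ (n * (n + 1) / 2)) ≠ 0 ∧
    ∑' c : {l : List ℕ // ∀ i ∈ l, ∃ n : ℕ, 1 ≤ n ∧ 2 * i = n * (n + 1)},
        (-1 : ℂ) ^ c.val.length * q ^ c.val.sum
      = (∑' n : ℕ, q ^ (n * (n + 1) / 2))⁻¹ := by
  have hq1 : ‖q‖ < 1 / 2 := hq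
  have hqlt1 : ‖q‖ < 1 := by linarith
  set P : ℕ → Prop := fun i => ∃ n : ℕ, 1 ≤ n ∧ 2 * i = n * (n + 1) with hP
  set β := {i : ℕ // P i} with hβ
  set f : β → ℂ := fun x => -q ^ (x.val) with hf
  -- every triangular part is at least 1
  have hb1 : ∀ x : β, 1 ≤ x.val := by
    rintro ⟨i, n, hn, h⟩
    nlinarith
  have hgeo : Summable (fun n : ℕ => ‖q‖ ^ n) :=
    summable_geometric_of_lt_one (norm_nonneg q) hqlt1
  have hfn : Summable (fun x : β => ‖f x‖) := by
    have h := hgeo.subtype {i : ℕ | P i}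
    exact h.congr fun x => by simp [hf]
  have hsum_lt : (∑' x : β, ‖f x‖) < 1 := by
    have hpos : (0:ℝ) < 1 - ‖q‖ := by linarith
    have hle : (∑' x : β, ‖f x‖) ≤ ∑' m : ℕ, ‖q‖ * ‖q‖ ^ m := by
      refine hfn.tsum_le_tsum_of_inj (fun x : β => x.val - 1)
        (fun a b hab => Subtype.ext (by
          have ha := hb1 a; have hbb := hb1 b; simp only [] at hab; omega))
        (fun c _ => by positivity) (fun x => ?_) (hgeo.mul_left _)
      show ‖f x‖ ≤ ‖q‖ * ‖q‖ ^ (x.val - 1)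
      refine le_of_eq ?_
      calc ‖f x‖ = ‖q‖ ^ ((x.val - 1) + 1) := by
              rw [Nat.sub_add_cancel (hb1 x)]; simp [hf]
        _ = ‖q‖ * ‖q‖ ^ (x.val - 1) := by rw [pow_succ]; ring

    have heq : (∑' m : ℕ, ‖q‖ * ‖q‖ ^ m) = ‖q‖ * (1 - ‖q‖)⁻¹ := by
      rw [tsum_mul_left, tsum_geometric_of_lt_one (norm_nonneg q) hqlt1]
    have : ‖q‖ * (1 - ‖q‖)⁻¹ < 1 := by
      rw [← div_eq_mul_inv, div_lt_one hpos]; linarith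
    linarith [hle, heq ▸ hle]
  -- the theta series
  have hψs : Summable (fun n : ℕ => q ^ (n * (n + 1) / 2)) := by
    refine Summable.of_norm_bounded hgeo fun n => ?_
    have hle : n ≤ n * (n + 1) / 2 :=
      (Nat.le_div_iff_mul_le (by norm_num)).2 (by
        rcases Nat.eq_zero_or_pos n with rfl | hn
        · simp
        · exact Nat.mul_le_mul (le_refl n) (by omega))
    rw [norm_pow]
    exact pow_le_pow_of_le_one (norm_nonneg q) (le_of_lt hqlt1) hle
  -- the triangular-number parametrisation
  have ht : ∀ n : ℕ, P ((n + 1) * (n + 2) / 2) := by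
    intro n
    refine ⟨n + 1, by omega, ?_⟩
    have he : 2 ∣ (n + 1) * (n + 2) := by
      have := Nat.even_mul_succ_self (n + 1)
      simpa [show n + 1 + 1 = n + 2 from rfl] using this.two_dvd
    rw [Nat.mul_div_cancel' he]
  have hmono : StrictMono (fun n : ℕ => (n + 1) * (n + 2) / 2) := by
    apply strictMono_nat_of_lt_succ
    intro n
    have hdvd : 2 ∣ (n + 2) * (n + 3) := by
      have := Nat.even_mul_succ_self (n + 2)
      simpa [show n + 2 + 1 = n + 3 from rfl] using this.two_dvd
    have hlt : (n + 1) * (n + 2) < (n + 2) * (n + 3) := by nlinarith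
    have := Nat.div_lt_div_of_lt_of_dvd hdvd hlt
    simpa [show n + 1 + 1 = n + 2 from rfl, show n + 1 + 2 = n + 3 from rfl] using this
  have hsurj : Function.Surjective (fun n : ℕ => (⟨(n + 1) * (n + 2) / 2, ht n⟩ : β)) := by
    rintro ⟨i, hi⟩
    obtain ⟨n, hn, h2i⟩ := hi
    refine ⟨n - 1, Subtype.ext ?_⟩
    show (n - 1 + 1) * (n - 1 + 2) / 2 = i
    have e1 : n - 1 + 1 = n := by omega
    have e2 : n - 1 + 2 = n + 1 := by omega
    rw [e1, e2]
    set m := n * (n + 1) with hm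
    omega
  set te : ℕ ≃ β := Equiv.ofBijective _
    ⟨fun a b hab => hmono.injective (congrArg Subtype.val hab), hsurj⟩ with hte
  -- ψ = 1 - ∑ f
  have hψ_eq : (∑' n : ℕ, q ^ (n * (n + 1) / 2)) = 1 - ∑' x : β, f x := by
    have h1 : (∑' x : β, f x) = - ∑' x : β, q ^ (x.val) := by
      rw [← tsum_neg]
    have h2 : (∑' x : β, q ^ (x.val)) = ∑' n : ℕ, q ^ ((n + 1) * (n + 2) / 2) := by
      rw [← te.tsum_eq (fun x : β => q ^ (x.val))]
      exact tsum_congr fun n => rfl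
    have h3 : (∑' n : ℕ, q ^ (n * (n + 1) / 2))
        = 1 + ∑' n : ℕ, q ^ ((n + 1) * (n + 2) / 2) := by
      rw [hψs.tsum_eq_zero_add]
      have h0 : q ^ (0 * (0 + 1) / 2) = 1 := by norm_num
      rw [h0]
    rw [h3, h1, h2]; ring
  have hrn : ‖∑' x : β, f x‖ < 1 := lt_of_le_of_lt (norm_tsum_le_tsum_norm hfn) hsum_lt
  have hψ_ne : (∑' n : ℕ, q ^ (n * (n + 1) / 2)) ≠ 0 := by
    rw [hψ_eq]
    intro h0
    rw [sub_eq_zero] at h0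
    rw [← h0] at hrn
    simp at hrn
  -- transport along the equivalence
  obtain ⟨hSig, hTsum⟩ := sigma_tsum_geometric f hfn hsum_lt
  set E : (Σ n, Fin n → β) ≃ {l : List ℕ // ∀ i ∈ l, P i} :=
    (List.equivSigmaTuple (α := β)).symm.trans (listSubtypeEquiv P) with hE
  have hEval : ∀ p : Σ n, Fin n → β,
      (-1 : ℂ) ^ ((E p).val.length) * q ^ ((E p).val.sum) = ∏ i, f (p.2 i) := by
    rintro ⟨n, v⟩
    have hv : (E ⟨n, v⟩).val = (List.ofFn v).map Subtype.val := rfl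
    rw [hv]
    have hlen : ((List.ofFn v).map Subtype.val).length = n := by simp
    have hsum : ((List.ofFn v).map Subtype.val).sum = ∑ i, (v i).val := by
      rw [List.map_ofFn, List.sum_ofFn]; rfl
    rw [hlen, hsum]
    calc (-1 : ℂ) ^ n * q ^ (∑ i, (v i).val)
        = (∏ _i : Fin n, (-1 : ℂ)) * ∏ i, q ^ ((v i).val) := by
          rw [Finset.prod_const, Finset.prod_pow_eq_pow_sum]
          simp
      _ = ∏ i, (-1 : ℂ) * q ^ ((v i).val) := by rw [Finset.prod_mul_distrib]
      _ = ∏ i, f (v i) := by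
          refine Finset.prod_congr rfl fun i _ => ?_
          simp [hf]
  refine ⟨?_, hψ_ne, ?_⟩
  · exact E.summable_iff.mp (hSig.congr fun p => (hEval p).symm)
  · calc (∑' c : {l : List ℕ // ∀ i ∈ l, P i},
          (-1 : ℂ) ^ c.val.length * q ^ c.val.sum)
        = ∑' p : Σ n, Fin n → β, (-1 : ℂ) ^ ((E p).val.length) * q ^ ((E p).val.sum) :=
          (E.tsum_eq _).symm
      _ = ∑' p : Σ n, Fin n → β, ∏ i, f (p.2 i) := tsum_congr hEval
      _ = (1 - ∑' x : β, f x)⁻¹ := hTsum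
      _ = (∑' n : ℕ, q ^ (n * (n + 1) / 2))⁻¹ := by rw [← hψ_eq]
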